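/- Every Δ-block tree T on the unit sphere of E contains a subtree T' (nonempty, and still a Δ-block tree) all of whose infinite branches are Δ-block sequences. -/

import Mathlib

open Filter Topology

noncomputable section

structure SchauderBasisR (X : Type*) [NormedAddCommGroup X] [NormedSpace ℝ X] where
  e : ℕ → X
  coord : ℕ → X →L[ℝ] ℝ
  biorth : ∀ n m, coord n (e m) = if n = m then 1 else 0
  expansion : ∀ x : X,
    Filter.Tendsto (fun N => ∑ n ∈ Finset.range N, coord n x • e n) Filter.atTop (nhds x)
  normalised : ∀ n, ‖e n‖ = 1

section Defs

variable {X Y : Type*} [NormedAddCommGroup X] [NormedSpace ℝ X]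
  [NormedAddCommGroup Y] [NormedSpace ℝ Y]

/-- Convergence of the series `∑ x n` (of partial sums). -/
def Converges (x : ℕ → X) : Prop :=
  ∃ s, Filter.Tendsto (fun N => ∑ n ∈ Finset.range N, x n) Filter.atTop (nhds s)

/-- Two sequences are equivalent if the same scalar series converge. -/
def SeqEquiv (x : ℕ → X) (y : ℕ → Y) : Prop :=
  ∀ a : ℕ → ℝ, Converges (fun n => a n • x n) ↔ Converges (fun n => a n • y n)

/-- `C`-equivalence of two sequences. -/
def CEquiv (C : ℝ) (x : ℕ → X) (y : ℕ → Y) : Prop :=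
  ∀ (a : ℕ → ℝ) (N : ℕ),
    C⁻¹ * ‖∑ n ∈ Finset.range N, a n • y n‖ ≤ ‖∑ n ∈ Finset.range N, a n • x n‖ ∧
    ‖∑ n ∈ Finset.range N, a n • x n‖ ≤ C * ‖∑ n ∈ Finset.range N, a n • y n‖

/-- A basic sequence: uniformly bounded partial-sum projections. -/
def IsBasicSeq (x : ℕ → X) : Prop :=
  ∃ K, 1 ≤ K ∧ ∀ (a : ℕ → ℝ) (m n : ℕ), m ≤ n →
    ‖∑ i ∈ Finset.range m, a i • x i‖ ≤ K * ‖∑ i ∈ Finset.range n, a i • x i‖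

/-- A sequence of signs. -/
def IsSigns (θ : ℕ → ℝ) : Prop := ∀ n, θ n = 1 ∨ θ n = -1

end Defs

namespace SchauderBasisR

variable {X : Type*} [NormedAddCommGroup X] [NormedSpace ℝ X] (b : SchauderBasisR X)

/-- Support of a vector with respect to the basis. -/
def supp (x : X) : Set ℕ := {n | b.coord n x ≠ 0}

/-- A normalised block sequence of the basis. -/
def IsBlockSeq (x : ℕ → X) : Prop :=
  (∀ n, ‖x n‖ = 1) ∧ (∀ n, (b.supp (x n)).Finite) ∧
  ∀ n, ∀ i ∈ b.supp (x n), ∀ j ∈ b.supp (x (n+1)), i < j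

/-- Unconditionality of the basis. -/
def Unconditional : Prop :=
  ∀ θ : ℕ → ℝ, IsSigns θ → SeqEquiv (fun n => θ n • b.e n) b.e

/-- 1-unconditionality (finite-sum form). -/
def OneUnconditional : Prop :=
  ∀ (θ a : ℕ → ℝ), IsSigns θ → ∀ N,
    ‖∑ n ∈ Finset.range N, (θ n * a n) • b.e n‖ ≤ ‖∑ n ∈ Finset.range N, a n • b.e n‖

/-- The shift property: every normalised block sequence is equivalent to its shift. -/
def ShiftProperty : Prop :=
  ∀ x : ℕ → X, b.IsBlockSeq x → SeqEquiv x (fun n => x (n+1))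

/-- The basis is shrinking. -/
def Shrinking : Prop :=
  ∀ f : X →L[ℝ] ℝ, Filter.Tendsto
    (fun n => sSup ((fun y => |f y|) ''
      {y | y ∈ Submodule.span ℝ (Set.range fun i => b.e (n + i)) ∧ ‖y‖ ≤ 1}))
    Filter.atTop (nhds 0)

/-- The basis is boundedly complete. -/
def BoundedlyComplete : Prop :=
  ∀ a : ℕ → ℝ, (∃ M, ∀ N, ‖∑ i ∈ Finset.range N, a i • b.e i‖ ≤ M) →
    Converges (fun i => a i • b.e i)

end SchauderBasisR
/-- A finite-dimensional decomposition of `F`, given by its coordinate projections. -/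
structure FDD (F : Type*) [NormedAddCommGroup F] [NormedSpace ℝ F] where
  Q : ℕ → F →L[ℝ] F
  idem : ∀ i x, Q i (Q i x) = Q i x
  orth : ∀ i j, i ≠ j → ∀ x, Q i (Q j x) = 0
  findim : ∀ i, FiniteDimensional ℝ (LinearMap.range ((Q i).toLinearMap))
  expansion : ∀ x,
    Filter.Tendsto (fun N => ∑ i ∈ Finset.range N, Q i x) Filter.atTop (nhds x)

namespace FDD

variable {F : Type*} [NormedAddCommGroup F] [NormedSpace ℝ F] (d : FDD F)

/-- Projection onto a finite set of coordinates. -/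
def proj (I : Finset ℕ) : F →L[ℝ] F := ∑ i ∈ I, d.Q i

/-- `K` is a constant for the decomposition. -/
def HasConstant (K : ℝ) : Prop :=
  1 ≤ K ∧ ∀ (x : F) (N : ℕ), ‖∑ i ∈ Finset.range N, d.Q i x‖ ≤ K * ‖x‖

/-- A `Δ`-block sequence of the decomposition, lying in `E`. -/
def DeltaBlock (E : Set F) (δ : ℕ → ℝ) (x : ℕ → F) : Prop :=
  (∀ i, x i ∈ E) ∧ (∀ i, ‖x i‖ = 1) ∧
  ∃ l r : ℕ → ℕ, (∀ i, l i ≤ r i) ∧ (∀ i, r i < l (i+1)) ∧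
    ∀ i, ‖d.proj (Finset.Icc (l i) (r i)) (x i) - x i‖ < δ i

/-- An `M`-separated `Δ`-block sequence of the decomposition, lying in `E`. -/
def MSepDeltaBlock (E : Set F) (δ : ℕ → ℝ) (M : ℕ → ℕ) (x : ℕ → F) : Prop :=
  (∀ i, x i ∈ E) ∧ (∀ i, ‖x i‖ = 1) ∧
  ∃ l r : ℕ → ℕ, (∀ i, l i ≤ r i) ∧ (∀ i, r i < l (i+1)) ∧
    (∀ i, ‖d.proj (Finset.Icc (l i) (r i)) (x i) - x i‖ < δ i) ∧
    M 0 < l 0 ∧ ∀ i, ∃ j, r i < M j ∧ M (j+1) < l (i+1)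

end FDD

/-- A decreasing null sequence of positive reals. -/
def NullSeq (δ : ℕ → ℝ) : Prop :=
  (∀ i, 0 < δ i) ∧ (∀ i, δ (i+1) ≤ δ i) ∧ Filter.Tendsto δ Filter.atTop (nhds 0)

/-- A tree on `F`: a nonempty set of finite sequences closed under initial segments. -/
def IsTree {F : Type*} (T : Set (List F)) : Prop :=
  T.Nonempty ∧ ∀ l ∈ T, ∀ l' : List F, l' <+: l → l' ∈ T

/-- A `Δ`-block tree on the unit sphere of `E`. -/
def DeltaBlockTree {F : Type*} [NormedAddCommGroup F] [NormedSpace ℝ F]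
    (d : FDD F) (E : Set F) (δ : ℕ → ℝ) (T : Set (List F)) : Prop :=
  IsTree T ∧ (∀ l ∈ T, ∀ v ∈ l, v ∈ E ∧ ‖v‖ = 1) ∧
  ∀ l ∈ T, ∃ (y : ℕ → F) (p q : ℕ → ℕ),
    Set.range y = {z | l ++ [z] ∈ T} ∧
    (∀ i, p i ≤ q i) ∧
    (∀ i, ‖d.proj (Finset.Icc (p i) (q i)) (y i) - y i‖ < δ l.length) ∧
    Filter.Tendsto p Filter.atTop Filter.atTop

/-- An infinite branch of a tree. -/
def IsBranch {F : Type*} (T : Set (List F)) (x : ℕ → F) : Prop :=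
  ∀ n, (List.ofFn fun i : Fin n => x i) ∈ T

section PruningAux

variable {F : Type*}

/-- The "last interval endpoint" along a finite sequence, defined recursively. -/
noncomputable def auxBnd (Y : List F → ℕ → F) (P Q : List F → ℕ → ℕ) : List F → ℕ :=
  fun l => List.reverseRecOn l 0 fun l' z ih =>
    Q l' (sInf {i | Y l' i = z ∧ ih < P l' i})

@[simp] lemma auxBnd_nil (Y : List F → ℕ → F) (P Q : List F → ℕ → ℕ) :
    auxBnd Y P Q [] = 0 := by
  simp [auxBnd]

@[simp] lemma auxBnd_concat (Y : List F → ℕ → F) (P Q : List F → ℕ → ℕ)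
    (l : List F) (z : F) :
    auxBnd Y P Q (l ++ [z]) =
      Q l (sInf {i | Y l i = z ∧ auxBnd Y P Q l < P l i}) := by
  simp [auxBnd]

/-- Membership predicate for the pruned tree. -/
def auxGood (T : Set (List F)) (Y : List F → ℕ → F) (P Q : List F → ℕ → ℕ) :
    List F → Prop :=
  fun l => List.reverseRecOn l True fun l' z ih =>
    ih ∧ l' ∈ T ∧ ∃ i, Y l' i = z ∧ auxBnd Y P Q l' < P l' i

@[simp] lemma auxGood_nil (T : Set (List F)) (Y : List F → ℕ → F) (P Q : List F → ℕ → ℕ) :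
    auxGood T Y P Q [] := by
  simp [auxGood]

@[simp] lemma auxGood_concat (T : Set (List F)) (Y : List F → ℕ → F) (P Q : List F → ℕ → ℕ)
    (l : List F) (z : F) :
    auxGood T Y P Q (l ++ [z]) ↔
      auxGood T Y P Q l ∧ l ∈ T ∧ ∃ i, Y l i = z ∧ auxBnd Y P Q l < P l i := by
  simp [auxGood]

end PruningAux

theorem delta_block_tree_pruning
    {F : Type*} [NormedAddCommGroup F] [NormedSpace ℝ F]
    (d : FDD F) (E : Set F) (δ : ℕ → ℝ) (hδ : NullSeq δ)
    (T : Set (List F)) (hT : DeltaBlockTree d E δ T) :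
    ∃ T' : Set (List F), T' ⊆ T ∧ DeltaBlockTree d E δ T' ∧
      ∀ x : ℕ → F, IsBranch T' x → d.DeltaBlock E δ x := by
  classical
  obtain ⟨⟨hne, hpre⟩, hmem, hsucc⟩ := hT
  choose! y p q hrange hle hnorm htend using hsucc
  have hnil : ([] : List F) ∈ T := by
    obtain ⟨l, hl⟩ := hne
    exact hpre l hl [] List.nil_prefix
  -- good lists are in T
  have goodT : ∀ l : List F, auxGood T y p q l → l ∈ T := by
    intro l
    induction l using List.reverseRecOn with
    | nil => intro _; exact hnil
    | append_singleton l z ih =>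
      intro h
      rw [auxGood_concat] at h
      obtain ⟨hgl, hlT, i, hyi, -⟩ := h
      have hz : z ∈ Set.range (y l) := ⟨i, hyi⟩
      rw [hrange l hlT] at hz
      exact hz
  -- good is closed under prefixes
  have goodPre : ∀ l : List F, auxGood T y p q l → ∀ l' : List F, l' <+: l →
      auxGood T y p q l' := by
    intro l
    induction l using List.reverseRecOn with
    | nil =>
      intro _ l' h
      rw [List.prefix_nil] at h
      subst h
      exact auxGood_nil T y p q
    | append_singleton l z ih =>
      intro h l' hp
      rcases List.prefix_concat_iff.mp hp with rfl | hp'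
      · exact h
      · exact ih ((auxGood_concat T y p q l z).mp h).1 l' hp'
  refine ⟨{l | auxGood T y p q l}, fun l hl => goodT l hl, ⟨⟨⟨[], auxGood_nil T y p q⟩,
    fun l hl l' hp => goodPre l hl l' hp⟩, fun l hl => hmem l (goodT l hl), ?_⟩, ?_⟩
  · -- successor condition for the pruned tree
    intro l hl
    have hlT : l ∈ T := goodT l hl
    obtain ⟨N, hN⟩ := Filter.eventually_atTop.mp
      ((htend l hlT).eventually_gt_atTop (auxBnd y p q l))
    refine ⟨fun k => y l (if auxBnd y p q l < p l k then k else N + k),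
      fun k => p l (if auxBnd y p q l < p l k then k else N + k),
      fun k => q l (if auxBnd y p q l < p l k then k else N + k), ?_,
      fun k => hle l hlT _, fun k => hnorm l hlT _, ?_⟩
    · ext z
      simp only [Set.mem_range, Set.mem_setOf_eq, auxGood_concat]
      constructor
      · rintro ⟨k, rfl⟩
        refine ⟨hl, hlT, if auxBnd y p q l < p l k then k else N + k, rfl, ?_⟩
        by_cases hk : auxBnd y p q l < p l k
        · simp [hk]
        · simp only [hk, if_false]
          exact hN (N + k) (Nat.le_add_right _ _)
      · rintro ⟨-, -, i, hyi, hi⟩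
        exact ⟨i, by simp [hi, hyi]⟩
    · refine (htend l hlT).comp (tendsto_atTop_mono (f := id) (fun k => ?_) tendsto_id)
      by_cases hk : auxBnd y p q l < p l k
      · simp [hk]
      · simp only [hk, if_false, id]
        omega
  · -- every branch is a Δ-block sequence
    intro x hx
    have hLn : ∀ n, auxGood T y p q (List.ofFn fun i : Fin n => x i) := hx
    have hcat : ∀ n, (List.ofFn fun i : Fin (n+1) => x i) =
        (List.ofFn fun i : Fin n => x i) ++ [x n] := by
      intro n
      rw [List.ofFn_succ']
      simp [List.concat_eq_append]
    have hgood : ∀ n, ∃ i, y (List.ofFn fun i : Fin n => x i) i = x n ∧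
        auxBnd y p q (List.ofFn fun i : Fin n => x i) <
          p (List.ofFn fun i : Fin n => x i) i := by
      intro n
      have h := hLn (n+1)
      rw [hcat n, auxGood_concat] at h
      exact h.2.2
    have hAne : ∀ n, {i | y (List.ofFn fun i : Fin n => x i) i = x n ∧
        auxBnd y p q (List.ofFn fun i : Fin n => x i) <
          p (List.ofFn fun i : Fin n => x i) i}.Nonempty := fun n => hgood n
    have hidx : ∀ n, sInf {i | y (List.ofFn fun i : Fin n => x i) i = x n ∧
        auxBnd y p q (List.ofFn fun i : Fin n => x i) <
          p (List.ofFn fun i : Fin n => x i) i} ∈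
        {i | y (List.ofFn fun i : Fin n => x i) i = x n ∧
        auxBnd y p q (List.ofFn fun i : Fin n => x i) <
          p (List.ofFn fun i : Fin n => x i) i} := fun n => Nat.sInf_mem (hAne n)
    have hLT : ∀ n, (List.ofFn fun i : Fin n => x i) ∈ T := fun n => goodT _ (hLn n)
    have hxmem : ∀ n, x n ∈ E ∧ ‖x n‖ = 1 := by
      intro n
      refine hmem _ (hLT (n+1)) (x n) ?_
      rw [hcat n]
      simp
    refine ⟨fun n => (hxmem n).1, fun n => (hxmem n).2,
      fun n => p (List.ofFn fun i : Fin n => x i)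
        (sInf {i | y (List.ofFn fun i : Fin n => x i) i = x n ∧
          auxBnd y p q (List.ofFn fun i : Fin n => x i) <
            p (List.ofFn fun i : Fin n => x i) i}),
      fun n => q (List.ofFn fun i : Fin n => x i)
        (sInf {i | y (List.ofFn fun i : Fin n => x i) i = x n ∧
          auxBnd y p q (List.ofFn fun i : Fin n => x i) <
            p (List.ofFn fun i : Fin n => x i) i}),
      fun n => hle _ (hLT n) _, ?_, ?_⟩
    · intro n
      have h := (hidx (n+1)).2
      simp only [hcat n, auxBnd_concat] at h
      simp only [hcat n, auxBnd_concat]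
      exact h
    · intro n
      have h := hnorm _ (hLT n) (sInf {i | y (List.ofFn fun i : Fin n => x i) i = x n ∧
          auxBnd y p q (List.ofFn fun i : Fin n => x i) <
            p (List.ofFn fun i : Fin n => x i) i})
      rw [(hidx n).1, List.length_ofFn] at h
      exact h
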